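/- Let u, v, w, x, y, z be positive integers which are the edge-lengths QP, RP, RQ, SP, SQ, SR of a Heronian tetrahedron: there exist rationals d ≠ 0 and c with (4d)² = (u+v+w)(u+v−w)(u−v+w)(−u+v+w) and (4c)² = (u+x+y)(u+x−y)(u−x+y)(−u+x+y), and a rational e with 288·e² equal to the Cayley–Menger determinant det !![0,1,1,1,1; 1,0,u²,v²,x²; 1,u²,0,w²,y²; 1,v²,w²,0,z²; 1,x²,y²,z²,0], with d, c ≥ 0 and e ≠ 0. Define the axial-pose coordinates R₁ = (v² − w² + u²)/(2u), R₂ = 2d/u, S₁ = (x² − y² + u²)/(2u), S₂ = (x² − z² + R₁² + R₂² − 2·S₁·R₁)/(2·R₂), S₃ = 3e/d, all in ℚ. Then every prime p dividing the denominator of any of R₁, R₂, S₁, S₂, S₃ (as reduced fractions) satisfies p ≡ 1 (mod 4). -/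

import Mathlib

-- step lemma: for bad primes, p^2 ∣ A²+B² forces p ∣ A and p ∣ B
lemma bad_prime_step (p : ℕ) (hp : p.Prime) (hmod : p % 4 ≠ 1) :
    ∀ A B : ℤ, (p:ℤ)^2 ∣ A^2 + B^2 → (p:ℤ) ∣ A ∧ (p:ℤ) ∣ B := by
  intro A B hAB
  rcases Nat.Prime.eq_two_or_odd hp with h2 | hodd
  · subst h2
    rcases Int.even_or_odd' A with ⟨a, ha | ha⟩ <;>
      rcases Int.even_or_odd' B with ⟨b, hb | hb⟩ <;> subst ha hb
    · constructor <;> exact Dvd.intro _ rfl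
    · exfalso
      have h4 : (4:ℤ) ∣ 4*(a^2+b^2+b) + 1 := by
        convert hAB using 1 <;> ring
      omega
    · exfalso
      have h4 : (4:ℤ) ∣ 4*(a^2+a+b^2) + 1 := by
        convert hAB using 1 <;> ring
      omega
    · exfalso
      have h4 : (4:ℤ) ∣ 4*(a^2+a+b^2+b) + 2 := by
        convert hAB using 1 <;> ring
      omega
  · -- p odd, p % 4 = 3
    have h3 : p % 4 = 3 := by omega
    haveI : Fact p.Prime := ⟨hp⟩
    have hdvd : (p:ℤ) ∣ A^2 + B^2 := dvd_trans (dvd_pow_self _ two_ne_zero) hAB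
    have hz : ((A:ZMod p))^2 + ((B:ZMod p))^2 = 0 := by
      have := (ZMod.intCast_zmod_eq_zero_iff_dvd (A^2+B^2) p).mpr hdvd
      push_cast at this
      exact this
    have hB0 : (B:ZMod p) = 0 := by
      by_contra hB
      have hsq : ((A:ZMod p) * (B:ZMod p)⁻¹)^2 = -1 := by
        field_simp
        linear_combination hz
      have : IsSquare (-1 : ZMod p) := ⟨(A:ZMod p) * (B:ZMod p)⁻¹, by rw [← hsq]; ring⟩
      rw [ZMod.exists_sq_eq_neg_one_iff] at this
      exact this h3
    have hA0 : (A:ZMod p) = 0 := by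
      rw [hB0] at hz
      have : ((A:ZMod p))^2 = 0 := by linear_combination hz
      exact pow_eq_zero_iff two_ne_zero |>.mp this
    exact ⟨(ZMod.intCast_zmod_eq_zero_iff_dvd A p).mp hA0,
      (ZMod.intCast_zmod_eq_zero_iff_dvd B p).mp hB0⟩

lemma bad_prime_descent (p : ℕ) (hp : p.Prime) (hmod : p % 4 ≠ 1) :
    ∀ k : ℕ, ∀ A B : ℤ, (p:ℤ)^(2*k) ∣ A^2 + B^2 → (p:ℤ)^k ∣ A ∧ (p:ℤ)^k ∣ B := by
  intro k
  induction k with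
  | zero => intro A B _; simp
  | succ n ih =>
    intro A B hAB
    have hp2 : (p:ℤ)^2 ∣ A^2 + B^2 := by
      refine dvd_trans (pow_dvd_pow _ ?_) hAB; omega
    obtain ⟨hA, hB⟩ := bad_prime_step p hp hmod A B hp2
    obtain ⟨A', rfl⟩ := hA
    obtain ⟨B', rfl⟩ := hB
    have hpne : ((p:ℤ)^2) ≠ 0 := pow_ne_zero _ (by exact_mod_cast hp.ne_zero)
    have h' : (p:ℤ)^(2*n) ∣ A'^2 + B'^2 := by
      have : (p:ℤ)^2 * ((p:ℤ)^(2*n)) ∣ (p:ℤ)^2 * (A'^2 + B'^2) := by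
        have e1 : (p:ℤ)^2 * ((p:ℤ)^(2*n)) = (p:ℤ)^(2*(n+1)) := by rw [← pow_add]; ring_nf
        have e2 : (p:ℤ)^2 * (A'^2 + B'^2) = ((p:ℤ)*A')^2 + ((p:ℤ)*B')^2 := by ring
        rw [e1, e2]; exact hAB
      exact (mul_dvd_mul_iff_left hpne).mp this
    obtain ⟨hA', hB'⟩ := ih A' B' h'
    constructor
    · rw [pow_succ']; exact mul_dvd_mul_left _ hA'
    · rw [pow_succ']; exact mul_dvd_mul_left _ hB'

lemma bad_prime_not_dvd_den (p : ℕ) (hp : p.Prime) (hmod : p % 4 ≠ 1)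
    (a b : ℚ) (hs : ¬ p ∣ (a^2 + b^2).den) : ¬ p ∣ a.den := by
  intro hpa
  set s : ℚ := a^2 + b^2 with hsdef
  have hdA : (a.den : ℚ) ≠ 0 := by exact_mod_cast a.den_nz
  have hdB : (b.den : ℚ) ≠ 0 := by exact_mod_cast b.den_nz
  have hdS : (s.den : ℚ) ≠ 0 := by exact_mod_cast s.den_nz
  have hA' : (a.num : ℚ) = a * a.den := by
    exact_mod_cast (Rat.mul_den_eq_num a).symm
  have hB' : (b.num : ℚ) = b * b.den := by
    exact_mod_cast (Rat.mul_den_eq_num b).symm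
  have hS' : (s.num : ℚ) = s * s.den := by
    exact_mod_cast (Rat.mul_den_eq_num s).symm
  have keyQ : (((a.num * b.den)^2 + (b.num * a.den)^2 : ℤ) : ℚ) * (s.den : ℚ)
      = (s.num : ℚ) * (((a.den : ℤ) * (b.den : ℤ) : ℤ) : ℚ)^2 := by
    push_cast
    rw [hsdef] at hS'
    linear_combination ((b.den:ℚ)^2 * (s.den:ℚ) * ((a.num:ℚ) + a * a.den)) * hA'
      + ((a.den:ℚ)^2 * (s.den:ℚ) * ((b.num:ℚ) + b * b.den)) * hB'
      - ((a.den:ℚ)^2 * (b.den:ℚ)^2) * hS'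
  have key : ((a.num * b.den)^2 + (b.num * a.den)^2) * (s.den : ℤ)
      = s.num * ((a.den : ℤ) * (b.den : ℤ))^2 := by exact_mod_cast keyQ
  set k : ℕ := (a.den * b.den).factorization p with hk
  have hdvdN : (p:ℤ)^k ∣ ((a.den * b.den : ℕ) : ℤ) := by
    exact_mod_cast Int.natCast_dvd_natCast.mpr (Nat.ordProj_dvd _ p)
  have h2k : (p:ℤ)^(2*k) ∣ (a.num * b.den)^2 + (b.num * a.den)^2 := by
    have hcop : IsCoprime ((p:ℤ)^(2*k)) ((s.den : ℕ) : ℤ) := by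
      apply IsCoprime.pow_left
      rw [Int.isCoprime_iff_gcd_eq_one, Int.gcd_natCast_natCast]
      exact hp.coprime_iff_not_dvd.mpr hs
    apply hcop.dvd_of_dvd_mul_right
    rw [key]
    apply Dvd.dvd.mul_left
    have hthis : (p:ℤ)^(2*k) ∣ (((a.den * b.den : ℕ) : ℤ))^2 := by
      rw [two_mul, pow_add, sq]; exact mul_dvd_mul hdvdN hdvdN
    have hcast : ((a.den : ℤ) * (b.den : ℤ)) = ((a.den * b.den : ℕ) : ℤ) := by push_cast; ring
    rw [hcast]; exact hthis
  obtain ⟨hnum, -⟩ := bad_prime_descent p hp hmod k _ _ h2k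
  have hpnum : ¬ (p:ℤ) ∣ a.num := by
    intro hcon
    have h1 : p ∣ a.num.natAbs := by
      rw [← Int.natAbs_natCast p]
      exact Int.natAbs_dvd_natAbs.mpr hcon
    have h2 : p ∣ Nat.gcd a.num.natAbs a.den := Nat.dvd_gcd h1 hpa
    have h4 : Nat.gcd a.num.natAbs a.den = 1 := a.reduced
    rw [h4] at h2
    exact hp.ne_one (Nat.dvd_one.mp h2)
  have hcopk : IsCoprime ((p:ℤ)^k) a.num := by
    apply IsCoprime.pow_left
    rw [Int.isCoprime_iff_gcd_eq_one]
    rcases (Nat.coprime_or_dvd_of_prime hp a.num.natAbs) with h | h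
    · exact h
    · exact absurd (Int.natAbs_dvd_natAbs.mp (by simpa using h)) hpnum
  have hkb : (p:ℤ)^k ∣ (b.den : ℤ) := by
    apply hcopk.dvd_of_dvd_mul_right
    rw [mul_comm]; exact hnum
  have hkbn : p^k ∣ b.den := by exact_mod_cast hkb
  have hkle : k ≤ b.den.factorization p :=
    (Nat.Prime.pow_dvd_iff_le_factorization hp b.den_nz).mp hkbn
  have hksum : k = a.den.factorization p + b.den.factorization p := by
    rw [hk, Nat.factorization_mul a.den_nz b.den_nz]; rfl
  have hapos : 1 ≤ a.den.factorization p :=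
    Nat.Prime.factorization_pos_of_dvd hp a.den_nz hpa
  omega

lemma bad_prime_pair (p : ℕ) (hp : p.Prime) (hmod : p % 4 ≠ 1)
    (a b r : ℚ) (h : a^2 + b^2 = r) (hr : ¬ p ∣ r.den) :
    ¬ p ∣ a.den ∧ ¬ p ∣ b.den := by
  constructor
  · exact bad_prime_not_dvd_den p hp hmod a b (by rw [h]; exact hr)
  · exact bad_prime_not_dvd_den p hp hmod b a (by rw [add_comm, h]; exact hr)

set_option maxHeartbeats 1000000 in
/-- The denominators of the coordinate components of a Heronian tetrahedron in
axial pose are products of primes congruent to `1` modulo `4`. -/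
theorem heronian_axial_pose_denominators (u v w x y z : ℤ)
    (hu : 0 < u) (hv : 0 < v) (hw : 0 < w) (hx : 0 < x) (hy : 0 < y) (hz : 0 < z)
    (d : ℚ) (hd0 : d ≠ 0) (hd : 0 ≤ d)
    (heron_d : (4 * d) ^ 2 =
      ((u : ℚ) + v + w) * ((u : ℚ) + v - w) * ((u : ℚ) - v + w) * (-(u : ℚ) + v + w))
    (c : ℚ) (hc : 0 ≤ c)
    (heron_c : (4 * c) ^ 2 =
      ((u : ℚ) + x + y) * ((u : ℚ) + x - y) * ((u : ℚ) - x + y) * (-(u : ℚ) + x + y))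
    (e : ℚ) (he : e ≠ 0)
    (hvol : 288 * e ^ 2 = Matrix.det
      !![0, 1, 1, 1, 1;
         1, 0, (u : ℚ) ^ 2, (v : ℚ) ^ 2, (x : ℚ) ^ 2;
         1, (u : ℚ) ^ 2, 0, (w : ℚ) ^ 2, (y : ℚ) ^ 2;
         1, (v : ℚ) ^ 2, (w : ℚ) ^ 2, 0, (z : ℚ) ^ 2;
         1, (x : ℚ) ^ 2, (y : ℚ) ^ 2, (z : ℚ) ^ 2, 0])
    (R₁ R₂ S₁ S₂ S₃ : ℚ)
    (hR₁ : R₁ = ((v : ℚ) ^ 2 - (w : ℚ) ^ 2 + (u : ℚ) ^ 2) / (2 * u))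
    (hR₂ : R₂ = 2 * d / u)
    (hS₁ : S₁ = ((x : ℚ) ^ 2 - (y : ℚ) ^ 2 + (u : ℚ) ^ 2) / (2 * u))
    (hS₂ : S₂ = ((x : ℚ) ^ 2 - (z : ℚ) ^ 2 + R₁ ^ 2 + R₂ ^ 2 - 2 * S₁ * R₁) / (2 * R₂))
    (hS₃ : S₃ = 3 * e / d) :
    ∀ p : ℕ, Nat.Prime p →
      ((p : ℤ) ∣ R₁.den ∨ (p : ℤ) ∣ R₂.den ∨ (p : ℤ) ∣ S₁.den ∨
        (p : ℤ) ∣ S₂.den ∨ (p : ℤ) ∣ S₃.den) →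
      p % 4 = 1 := by
  intro p hp hdvd
  by_contra hmod
  have hu0 : (u:ℚ) ≠ 0 := Int.cast_ne_zero.mpr hu.ne'
  have hR₂0 : R₂ ≠ 0 := by
    rw [hR₂]; exact div_ne_zero (mul_ne_zero two_ne_zero hd0) hu0
  have hv2 : (v:ℚ)^2 = R₁^2 + R₂^2 := by
    rw [hR₁, hR₂]; field_simp; linear_combination (-1:ℚ) * heron_d
  have hw2 : (w:ℚ)^2 = R₁^2 + R₂^2 + (u:ℚ)^2 - 2*u*R₁ := by
    rw [hR₁, hR₂]; field_simp; linear_combination (-1:ℚ) * heron_d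
  have hy2 : (y:ℚ)^2 = (x:ℚ)^2 + (u:ℚ)^2 - 2*u*S₁ := by
    rw [hS₁]; field_simp; try ring
  have hz2 : (z:ℚ)^2 = (x:ℚ)^2 + R₁^2 + R₂^2 - 2*S₁*R₁ - 2*S₂*R₂ := by
    rw [hS₂]; field_simp; try ring
  have hdet : 288 * e^2 = 8*(u:ℚ)^2*R₂^2*((x:ℚ)^2 - S₁^2 - S₂^2) := by
    rw [hvol, hz2, hy2, hw2, hv2]
    simp only [Matrix.det_succ_row_zero, Fin.sum_univ_succ, Matrix.det_unique,
      Fin.default_eq_zero, Matrix.submatrix_apply, Matrix.submatrix_submatrix,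
      Function.comp_apply, Fin.succ_zero_eq_one, Fin.succ_one_eq_two,
      Fin.sum_univ_zero, Finset.univ_unique, Finset.sum_singleton,
      Fin.val_zero, Fin.val_succ, Fin.zero_succAbove, Fin.succ_succAbove_zero,
      Fin.succ_succAbove_one, Fin.val_eq_zero, Matrix.cons_val', Matrix.cons_val_zero,
      Matrix.cons_val_one, Matrix.head_cons, Matrix.head_fin_const, Matrix.empty_val',
      Matrix.cons_val_fin_one, Matrix.cons_val_succ]
    norm_num [Fin.succAbove, Fin.lt_def, Fin.castSucc, Fin.castAdd, Fin.castLE,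
      Matrix.vecHead, Matrix.vecTail, Matrix.cons_val, Matrix.cons_val_two]
    ring
  have huR : (u:ℚ)^2 * R₂^2 = 4*d^2 := by rw [hR₂]; field_simp; ring
  have hdet2 : 288 * e^2 = 32*d^2*((x:ℚ)^2 - S₁^2 - S₂^2) := by
    rw [hdet]; linear_combination (8*((x:ℚ)^2 - S₁^2 - S₂^2)) * huR
  have h9 : 9 * e^2 = d^2 * S₃^2 := by rw [hS₃]; field_simp; ring
  have hS3sq : S₃^2 = (x:ℚ)^2 - S₁^2 - S₂^2 := by
    have hd2 : d^2 ≠ 0 := pow_ne_zero _ hd0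
    apply mul_left_cancel₀ hd2
    linear_combination (-1:ℚ) * h9 + (1/32:ℚ) * hdet2
  have h1 : R₁^2 + R₂^2 = ((v^2 : ℤ) : ℚ) := by push_cast; exact hv2.symm
  have h2 : S₁^2 + (2*c/(u:ℚ))^2 = ((x^2:ℤ):ℚ) := by
    push_cast; rw [hS₁]; field_simp; linear_combination heron_c
  have h3 : S₂^2 + S₃^2 = (x:ℚ)^2 - S₁^2 := by rw [hS3sq]; ring
  have hIntDen : ∀ n : ℤ, ¬ p ∣ ((n:ℚ)).den := by
    intro n hcon; rw [Rat.den_intCast] at hcon; exact hp.ne_one (Nat.dvd_one.mp hcon)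
  have hR := bad_prime_pair p hp hmod R₁ R₂ _ h1 (hIntDen _)
  have hS1d := (bad_prime_pair p hp hmod S₁ (2*c/(u:ℚ)) _ h2 (hIntDen _)).1
  have hden3 : ¬ p ∣ ((x:ℚ)^2 - S₁^2).den := by
    intro hcon
    have hd1 : ((x:ℚ)^2 - S₁^2).den ∣ ((x:ℚ)^2).den * (-(S₁^2)).den := by
      rw [sub_eq_add_neg]; exact Rat.add_den_dvd _ _
    rw [Rat.den_neg_eq_den] at hd1
    have hx2 : ((x:ℚ)^2).den = 1 := by
      rw [show ((x:ℚ))^2 = ((x^2:ℤ):ℚ) by push_cast; ring, Rat.den_intCast]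
    rw [hx2, one_mul] at hd1
    have hd2 : (S₁^2).den ∣ S₁.den * S₁.den := by rw [sq]; exact Rat.mul_den_dvd _ _
    have : p ∣ S₁.den * S₁.den := dvd_trans (dvd_trans hcon hd1) hd2
    rcases (Nat.Prime.dvd_mul hp).mp this with h | h <;> exact hS1d h
  have hS23 := bad_prime_pair p hp hmod S₂ S₃ _ h3 hden3
  rcases hdvd with h | h | h | h | h
  · exact hR.1 (Int.natCast_dvd_natCast.mp h)
  · exact hR.2 (Int.natCast_dvd_natCast.mp h)
  · exact hS1d (Int.natCast_dvd_natCast.mp h)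
  · exact hS23.1 (Int.natCast_dvd_natCast.mp h)
  · exact hS23.2 (Int.natCast_dvd_natCast.mp h)
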